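/- Let A be a commutative ring and I an ideal of A. The following are equivalent: (1) every regular ideal of the amalgamated duplication A⋈I has the form H⋈I for some regular ideal H of A; (2) I = aI for every regular element a of A. -/

import Mathlib

/-- An ideal is *regular* if it contains a regular element (a non-zero-divisor). -/
def Ideal.IsRegularIdeal {A : Type*} [CommRing A] (I : Ideal A) : Prop :=
  ∃ a ∈ I, a ∈ nonZeroDivisors A

/-- An ideal is *invertible* if it is regular, finitely generated and locally principal. -/
def Ideal.IsInvertibleIdeal {A : Type*} [CommRing A] (J : Ideal A) : Prop :=
  J.IsRegularIdeal ∧ J.FG ∧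
    ∀ M : Ideal A, ∀ hM : M.IsMaximal,
      haveI := hM.isPrime
      (J.map (algebraMap A (Localization.AtPrime M))).IsPrincipal

/-- `I` can be written as an invertible ideal times a nonempty product of
proper radical ideals. -/
def Ideal.HasISPFactorization {A : Type*} [CommRing A] (I : Ideal A) : Prop :=
  ∃ (J : Ideal A) (L : List (Ideal A)), J.IsInvertibleIdeal ∧ L ≠ [] ∧
    (∀ H ∈ L, H ≠ ⊤ ∧ H.IsRadical) ∧ I = J * L.prod

/-- An ISP-ring: every proper regular ideal factors as an invertible ideal times a
nonempty product of proper radical ideals. -/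
def IsISPRing (A : Type*) [CommRing A] : Prop :=
  ∀ I : Ideal A, I ≠ ⊤ → I.IsRegularIdeal → I.HasISPFactorization

/-- A strongly ISP-ring: every proper ideal factors as an invertible ideal times a
nonempty product of proper radical ideals. -/
def IsStronglyISPRing (A : Type*) [CommRing A] : Prop :=
  ∀ I : Ideal A, I ≠ ⊤ → I.HasISPFactorization

/-- An ISP-domain: an integral domain in which every proper nonzero ideal factors as an
invertible ideal times a nonempty product of proper radical ideals. -/
def IsISPDomain (A : Type*) [CommRing A] : Prop :=
  IsDomain A ∧ ∀ I : Ideal A, I ≠ ⊤ → I ≠ ⊥ → I.HasISPFactorization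

/-- The amalgamated duplication `A ⋈ I` of a ring `A` along an ideal `I`, realized as
the subring `{(a, a + i) : a ∈ A, i ∈ I}` of `A × A`. -/
def AmalgDup {A : Type*} [CommRing A] (I : Ideal A) : Subring (A × A) where
  carrier := {p | p.2 - p.1 ∈ I}
  zero_mem' := by simp
  one_mem' := by simp
  add_mem' := by
    intro a b ha hb
    show (a + b).2 - (a + b).1 ∈ I
    have h : (a + b).2 - (a + b).1 = (a.2 - a.1) + (b.2 - b.1) := by
      simp; ring
    rw [h]; exact I.add_mem ha hb
  neg_mem' := by
    intro a ha
    show (-a).2 - (-a).1 ∈ I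
    have h : (-a).2 - (-a).1 = -(a.2 - a.1) := by
      simp only [Prod.fst_neg, Prod.snd_neg]; ring
    rw [h]; exact I.neg_mem ha
  mul_mem' := by
    intro a b ha hb
    show (a * b).2 - (a * b).1 ∈ I
    have h : (a * b).2 - (a * b).1 = a.2 * (b.2 - b.1) + (a.2 - a.1) * b.1 := by
      simp; ring
    rw [h]
    exact I.add_mem (I.mul_mem_left _ hb) (I.mul_mem_right _ ha)

/-- The ideal `H ⋈ I = {(h, h + i) : h ∈ H, i ∈ I}` of the amalgamated duplication `A ⋈ I`. -/
def Ideal.amalgDup {A : Type*} [CommRing A] (H I : Ideal A) : Ideal (AmalgDup I) where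
  carrier := {x | (x : A × A).1 ∈ H}
  zero_mem' := H.zero_mem
  add_mem' := fun ha hb => H.add_mem ha hb
  smul_mem' := fun c x hx => by
    show ((c * x : AmalgDup I) : A × A).1 ∈ H
    push_cast
    exact H.mul_mem_left _ hx

section MainProof

variable {A : Type*} [CommRing A] {I : Ideal A}

lemma mem_amalgDup_iff (I : Ideal A) (p : A × A) : p ∈ AmalgDup I ↔ p.2 - p.1 ∈ I := Iff.rfl

lemma mem_ideal_amalgDup_iff (H : Ideal A) (x : AmalgDup I) :
    x ∈ H.amalgDup I ↔ (x : A × A).1 ∈ H := Iff.rfl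

/-- The element `(a, a+i)` of `A ⋈ I`. -/
def elt (a : A) (i : A) (hi : i ∈ I) : AmalgDup I :=
  ⟨(a, a + i), by simpa [mem_amalgDup_iff] using hi⟩

theorem amalgDup_regular_ideals_iff' :
    (∀ J : Ideal (AmalgDup I), J.IsRegularIdeal →
        ∃ H : Ideal A, H.IsRegularIdeal ∧ J = H.amalgDup I) ↔
      ∀ a ∈ nonZeroDivisors A, I = Ideal.span {a} * I := by
  constructor
  · intro h a ha
    set z : AmalgDup I := elt a 0 I.zero_mem with hz
    have hzval : (z : A × A) = (a, a) := by simp [hz, elt]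
    have hzreg : z ∈ nonZeroDivisors (AmalgDup I) := by
      rw [mem_nonZeroDivisors_iff_right]
      intro w hw
      have hw' : (w : A × A) * (a, a) = 0 := by
        have := congrArg Subtype.val hw
        push_cast at this
        rwa [hzval] at this
      have h1 : (w : A × A).1 * a = 0 := congrArg Prod.fst hw'
      have h2 : (w : A × A).2 * a = 0 := congrArg Prod.snd hw'
      rw [Subtype.ext_iff]
      ext
      · simpa using (mem_nonZeroDivisors_iff_right.mp ha) _ h1
      · simpa using (mem_nonZeroDivisors_iff_right.mp ha) _ h2
    obtain ⟨H, hHreg, hJ⟩ := h (Ideal.span {z}) ⟨z, Ideal.mem_span_singleton_self z, hzreg⟩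
    refine le_antisymm ?_ Ideal.mul_le_right
    intro i hi
    have haH : a ∈ H := by
      have : z ∈ Ideal.span {z} := Ideal.mem_span_singleton_self z
      rw [hJ, mem_ideal_amalgDup_iff, hzval] at this
      exact this
    have hmem : elt a i hi ∈ Ideal.span {z} := by
      rw [hJ, mem_ideal_amalgDup_iff]
      exact haH
    obtain ⟨c, hc⟩ := Ideal.mem_span_singleton'.mp hmem
    have hcval : ((c * z : AmalgDup I) : A × A) = (a, a + i) := by
      rw [hc]; rfl
    push_cast at hcval
    rw [hzval] at hcval
    have h1 : (c : A × A).1 * a = a := congrArg Prod.fst hcval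
    have h2 : (c : A × A).2 * a = a + i := congrArg Prod.snd hcval
    have hdI : (c : A × A).2 - (c : A × A).1 ∈ I := c.2
    refine Ideal.mem_span_singleton_mul.mpr ⟨(c : A × A).2 - (c : A × A).1, hdI, ?_⟩
    rw [mul_comm, sub_mul, h1, h2]
    ring
  · intro h J hJ
    obtain ⟨z, hzJ, hzreg⟩ := hJ
    set x := (z : A × A).1 with hx
    set y := (z : A × A).2 with hy
    have hyx : y - x ∈ I := z.2
    have hwmem : ((y, x) : A × A) ∈ AmalgDup I := by
      rw [mem_amalgDup_iff]
      simpa using I.neg_mem hyx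
    set w : AmalgDup I := ⟨(y, x), hwmem⟩ with hw
    have hzw : ((z * w : AmalgDup I) : A × A) = (x * y, x * y) := by
      push_cast
      ext
      · show x * y = x * y; rfl
      · show y * x = x * y; ring
    have hzwJ : z * w ∈ J := J.mul_mem_right w hzJ
    -- x * y is regular in A
    have hareg : x * y ∈ nonZeroDivisors A := by
      rw [mem_nonZeroDivisors_iff_right]
      intro u hu
      have hcmem : ((u * y, u * x) : A × A) ∈ AmalgDup I := by
        rw [mem_amalgDup_iff]
        have : u * x - u * y = (-u) * (y - x) := by ring
        rw [this]
        exact I.mul_mem_left _ hyx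
      set c : AmalgDup I := ⟨(u * y, u * x), hcmem⟩ with hcdef
      have hcz : c * z = 0 := by
        rw [Subtype.ext_iff]
        push_cast
        ext
        · show u * y * x = 0; rw [← hu]; ring
        · show u * x * y = 0; rw [← hu]; ring
      have hc0 : c = 0 := (mem_nonZeroDivisors_iff_right.mp hzreg) c hcz
      have huy : u * y = 0 := congrArg (fun t => ((t : AmalgDup I) : A × A).1) hc0
      have hux : u * x = 0 := congrArg (fun t => ((t : AmalgDup I) : A × A).2) hc0
      have hdmem : ((u, u) : A × A) ∈ AmalgDup I := by
        rw [mem_amalgDup_iff]; simp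
      set d : AmalgDup I := ⟨(u, u), hdmem⟩ with hddef
      have hdz : d * z = 0 := by
        rw [Subtype.ext_iff]
        push_cast
        ext
        · show u * x = 0; exact hux
        · show u * y = 0; exact huy
      have hd0 : d = 0 := (mem_nonZeroDivisors_iff_right.mp hzreg) d hdz
      exact congrArg (fun t => ((t : AmalgDup I) : A × A).1) hd0
    -- {0} × I ⊆ J
    have key : ∀ i (hi : i ∈ I), elt (I := I) 0 i hi ∈ J := by
      intro i hi
      have hi2 : i ∈ Ideal.span {x * y} * I := by
        rw [← h (x * y) hareg]; exact hi
      obtain ⟨i', hi', hii'⟩ := Ideal.mem_span_singleton_mul.mp hi2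
      have hthis : elt (I := I) 0 i hi = (z * w) * elt 0 i' hi' := by
        rw [Subtype.ext_iff, MulMemClass.coe_mul, hzw]
        ext
        · show (0 : A) = x * y * 0; ring
        · show (0 : A) + i = x * y * (0 + i'); rw [← hii']; ring
      rw [hthis]
      exact J.mul_mem_right _ hzwJ
    -- the projection map and H
    set f : AmalgDup I →+* A := (RingHom.fst A A).comp (AmalgDup I).subtype with hf
    have hfs : Function.Surjective f := fun a => ⟨elt a 0 I.zero_mem, rfl⟩
    refine ⟨J.map f, ⟨x * y, ?_, hareg⟩, ?_⟩
    · exact Ideal.mem_map_of_mem f hzwJ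
    · ext v
      rw [mem_ideal_amalgDup_iff, Ideal.mem_map_iff_of_surjective f hfs]
      constructor
      · intro hv
        exact ⟨v, hv, rfl⟩
      · rintro ⟨p, hpJ, hpv⟩
        have hpv' : (p : A × A).1 = (v : A × A).1 := hpv
        have hdiff : (v : A × A).2 - (p : A × A).2 ∈ I := by
          have h1 := v.2
          have h2 := p.2
          rw [mem_amalgDup_iff] at h1 h2
          have heq : (v : A × A).2 - (p : A × A).2 =
              ((v : A × A).2 - (v : A × A).1) - ((p : A × A).2 - (p : A × A).1) := by
            rw [← hpv']; ring
          rw [heq]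
          exact I.sub_mem h1 h2
        have hvp : v = p + elt 0 ((v : A × A).2 - (p : A × A).2) hdiff := by
          rw [Subtype.ext_iff]
          push_cast
          ext
          · show (v : A × A).1 = (p : A × A).1 + 0
            rw [hpv', add_zero]
          · show (v : A × A).2 = (p : A × A).2 + (0 + ((v : A × A).2 - (p : A × A).2))
            ring
        rw [hvp]
        exact J.add_mem hpJ (key _ hdiff)

end MainProof

/-- Every regular ideal of `A ⋈ I` has the form `H ⋈ I` with `H` a regular ideal of `A`
if and only if `I = aI` for every regular element `a` of `A`. -/
theorem amalgDup_regular_ideals_iff {A : Type*} [CommRing A] (I : Ideal A) :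
    (∀ J : Ideal (AmalgDup I), J.IsRegularIdeal →
        ∃ H : Ideal A, H.IsRegularIdeal ∧ J = H.amalgDup I) ↔
      ∀ a ∈ nonZeroDivisors A, I = Ideal.span {a} * I := by
  exact amalgDup_regular_ideals_iff'
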